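/- There exists a family of 5 axis-parallel segments (1-boxes) in ℝ² whose intersection graph is the complement of C₅; consequently every 4 of these segments can be pierced by 2 points, but the whole family requires 3 points. Hence the Helly number h(d,1,2) for 2-piercing families of segments in ℝ^d (d ≥ 2) is at least 5. -/
import Mathlib


open Set

/-- An axis-parallel box in `ℝ^d`: a product of nonempty closed intervals. -/
def IsBoxIn (d : ℕ) (s : Set (Fin d → ℝ)) : Prop :=
  ∃ lo hi : Fin d → ℝ, (∀ i, lo i ≤ hi i) ∧
    s = {x | ∀ i, x i ∈ Set.Icc (lo i) (hi i)}

/-- A `p`-box in `ℝ^d`: a product of nonempty closed intervals, exactly `d - p`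
of which are degenerate (single points). -/
def IsPBoxIn (p d : ℕ) (s : Set (Fin d → ℝ)) : Prop :=
  ∃ lo hi : Fin d → ℝ, (∀ i, lo i ≤ hi i) ∧
    {i : Fin d | lo i = hi i}.ncard = d - p ∧
    s = {x | ∀ i, x i ∈ Set.Icc (lo i) (hi i)}

/-- A graph is an interval graph if it is the intersection graph of a family of
closed real intervals. -/
def IsIntervalGraph {V : Type*} (G : SimpleGraph V) : Prop :=
  ∃ a b : V → ℝ, (∀ v, a v ≤ b v) ∧
    ∀ u v : V, u ≠ v →
      (G.Adj u v ↔ (Set.Icc (a u) (b u) ∩ Set.Icc (a v) (b v)).Nonempty)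

/-- `G` is the intersection graph of a family of `p`-boxes in `ℝ^d`. -/
def RealizableAsPBoxes {V : Type*} (p d : ℕ) (G : SimpleGraph V) : Prop :=
  ∃ B : V → Set (Fin d → ℝ), (∀ v, IsPBoxIn p d (B v)) ∧
    ∀ u v : V, u ≠ v → (G.Adj u v ↔ (B u ∩ B v).Nonempty)

/-- `G` is the intersection graph of a family of (full) axis-parallel boxes in `ℝ^d`. -/
def RealizableAsBoxes {V : Type*} (d : ℕ) (G : SimpleGraph V) : Prop :=
  ∃ B : V → Set (Fin d → ℝ), (∀ v, IsBoxIn d (B v)) ∧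
    ∀ u v : V, u ≠ v → (G.Adj u v ↔ (B u ∩ B v).Nonempty)

/-- The intersection graph of a family of sets in `ℝ^d`. -/
def intersectionGraph {ι : Type*} {d : ℕ} (B : ι → Set (Fin d → ℝ)) : SimpleGraph ι :=
  SimpleGraph.fromRel fun i j => (B i ∩ B j).Nonempty

/-- The family `B` can be pierced by at most `n` points. -/
def Pierceable {ι : Type*} {d : ℕ} (B : ι → Set (Fin d → ℝ)) (n : ℕ) : Prop :=
  ∃ P : Finset (Fin d → ℝ), P.card ≤ n ∧ ∀ i, ∃ p ∈ P, p ∈ B i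

/-- The subfamily of `B` indexed by `S` can be pierced by at most `n` points. -/
def PierceableOn {ι : Type*} {d : ℕ} (B : ι → Set (Fin d → ℝ)) (S : Finset ι) (n : ℕ) : Prop :=
  ∃ P : Finset (Fin d → ℝ), P.card ≤ n ∧ ∀ i ∈ S, ∃ p ∈ P, p ∈ B i

/-- The cycle graph on `s` vertices, with vertex set `ZMod s`. -/
def cyc (s : ℕ) : SimpleGraph (ZMod s) := SimpleGraph.fromRel fun i j => j = i + 1

/-- The boxicity of a graph, as an extended natural number. -/
noncomputable def boxicity {V : Type*} (G : SimpleGraph V) : ℕ∞ :=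
  sInf {n : ℕ∞ | ∃ k : ℕ, n = k ∧ RealizableAsBoxes k G}

/-- The `p`-boxicity of a graph: the least `d ≥ p` such that `G` is realizable as
`p`-boxes in `ℝ^d` (possibly `∞`). -/
noncomputable def pboxicity {V : Type*} (p : ℕ) (G : SimpleGraph V) : ℕ∞ :=
  sInf {n : ℕ∞ | ∃ k : ℕ, n = k ∧ p ≤ k ∧ RealizableAsPBoxes p k G}

namespace C5

lemma zmod5_cases : ∀ v : ZMod 5, v = 0 ∨ v = 1 ∨ v = 2 ∨ v = 3 ∨ v = 4 := by decide

/-- x-lower -/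
def Ax : ZMod 5 → ℝ := fun v => if v = 0 then 0 else if v = 1 then 5 else if v = 2 then 0 else if v = 3 then 2 else 0
/-- y-lower -/
def Ay : ZMod 5 → ℝ := fun v => if v = 4 then 2 else 0
/-- x-upper -/
def Cx : ZMod 5 → ℝ := fun v => if v = 0 then 3 else if v = 1 then 5 else if v = 2 then 0 else 5
/-- y-upper -/
def Cy : ZMod 5 → ℝ := fun v => if v = 0 then 0 else if v = 3 then 0 else 2

@[simp] lemma Ax0 : Ax 0 = 0 := by simp (config := { decide := true }) [Ax]
@[simp] lemma Ax1 : Ax 1 = 5 := by simp (config := { decide := true }) [Ax]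
@[simp] lemma Ax2 : Ax 2 = 0 := by simp (config := { decide := true }) [Ax]
@[simp] lemma Ax3 : Ax 3 = 2 := by simp (config := { decide := true }) [Ax]
@[simp] lemma Ax4 : Ax 4 = 0 := by simp (config := { decide := true }) [Ax]
@[simp] lemma Ay0 : Ay 0 = 0 := by simp (config := { decide := true }) [Ay]
@[simp] lemma Ay1 : Ay 1 = 0 := by simp (config := { decide := true }) [Ay]
@[simp] lemma Ay2 : Ay 2 = 0 := by simp (config := { decide := true }) [Ay]
@[simp] lemma Ay3 : Ay 3 = 0 := by simp (config := { decide := true }) [Ay]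
@[simp] lemma Ay4 : Ay 4 = 2 := by simp (config := { decide := true }) [Ay]
@[simp] lemma Cx0 : Cx 0 = 3 := by simp (config := { decide := true }) [Cx]
@[simp] lemma Cx1 : Cx 1 = 5 := by simp (config := { decide := true }) [Cx]
@[simp] lemma Cx2 : Cx 2 = 0 := by simp (config := { decide := true }) [Cx]
@[simp] lemma Cx3 : Cx 3 = 5 := by simp (config := { decide := true }) [Cx]
@[simp] lemma Cx4 : Cx 4 = 5 := by simp (config := { decide := true }) [Cx]
@[simp] lemma Cy0 : Cy 0 = 0 := by simp (config := { decide := true }) [Cy]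
@[simp] lemma Cy1 : Cy 1 = 2 := by simp (config := { decide := true }) [Cy]
@[simp] lemma Cy2 : Cy 2 = 2 := by simp (config := { decide := true }) [Cy]
@[simp] lemma Cy3 : Cy 3 = 0 := by simp (config := { decide := true }) [Cy]
@[simp] lemma Cy4 : Cy 4 = 2 := by simp (config := { decide := true }) [Cy]

def pt (d : ℕ) (a b : ℝ) : Fin d → ℝ := fun i => if i.val = 0 then a else if i.val = 1 then b else 0

def Box (d : ℕ) (v : ZMod 5) : Set (Fin d → ℝ) :=
  {x | ∀ i, x i ∈ Icc (pt d (Ax v) (Ay v) i) (pt d (Cx v) (Cy v) i)}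

lemma mem_box_x {d : ℕ} (h0 : 0 < d) {v : ZMod 5} {x : Fin d → ℝ} (hx : x ∈ Box d v) :
    Ax v ≤ x ⟨0, h0⟩ ∧ x ⟨0, h0⟩ ≤ Cx v := by
  have := hx ⟨0, h0⟩
  simpa [pt] using this

lemma mem_box_y {d : ℕ} (h1 : 1 < d) {v : ZMod 5} {x : Fin d → ℝ} (hx : x ∈ Box d v) :
    Ay v ≤ x ⟨1, h1⟩ ∧ x ⟨1, h1⟩ ≤ Cy v := by
  have := hx ⟨1, h1⟩
  simpa [pt] using this

lemma pt_mem_box {d : ℕ} {v : ZMod 5} {a b : ℝ} (ha : Ax v ≤ a) (ha' : a ≤ Cx v)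
    (hb : Ay v ≤ b) (hb' : b ≤ Cy v) : pt d a b ∈ Box d v := by
  intro i
  by_cases h0 : i.val = 0
  · simpa [pt, h0] using ⟨ha, ha'⟩
  · by_cases h1 : i.val = 1
    · simpa [pt, h0, h1] using ⟨hb, hb'⟩
    · simp [pt, h0, h1]

lemma disjX {d : ℕ} (h0 : 0 < d) {u v : ZMod 5} (h : Cx u < Ax v) :
    ¬ (Box d u ∩ Box d v).Nonempty := by
  rintro ⟨x, hxu, hxv⟩
  have h1 := (mem_box_x h0 hxu).2
  have h2 := (mem_box_x h0 hxv).1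
  linarith

lemma disjY {d : ℕ} (h1 : 1 < d) {u v : ZMod 5} (h : Cy u < Ay v) :
    ¬ (Box d u ∩ Box d v).Nonempty := by
  rintro ⟨x, hxu, hxv⟩
  have ha := (mem_box_y h1 hxu).2
  have hb := (mem_box_y h1 hxv).1
  linarith


lemma ncard_ne_val {d k : ℕ} (hk : k < d) : {i : Fin d | ¬ i.val = k}.ncard = d - 1 := by
  have h : {i : Fin d | ¬ i.val = k} = ↑(({⟨k, hk⟩} : Finset (Fin d))ᶜ) := by
    ext i
    simp [Fin.ext_iff]
  rw [h, Set.ncard_coe_finset, Finset.card_compl]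
  simp

lemma isPBox (d : ℕ) (hd : 2 ≤ d) (v : ZMod 5) : IsPBoxIn 1 d (Box d v) := by
  have h0 : (0 : ℕ) < d := by omega
  have h1 : (1 : ℕ) < d := by omega
  refine ⟨pt d (Ax v) (Ay v), pt d (Cx v) (Cy v), ?_, ?_, rfl⟩
  · intro i
    rcases zmod5_cases v with rfl | rfl | rfl | rfl | rfl <;>
      · simp only [pt]
        split_ifs <;> norm_num
  · have key : {i : Fin d | pt d (Ax v) (Ay v) i = pt d (Cx v) (Cy v) i}.ncard = d - 1 := by
      rcases zmod5_cases v with rfl | rfl | rfl | rfl | rfl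
      · rw [show {i : Fin d | pt d (Ax 0) (Ay 0) i = pt d (Cx 0) (Cy 0) i}
            = {i : Fin d | ¬ i.val = 0} by
          ext i; by_cases h : i.val = 0 <;> by_cases h' : i.val = 1 <;> simp [pt, h, h'] <;> norm_num]
        exact ncard_ne_val h0
      · rw [show {i : Fin d | pt d (Ax 1) (Ay 1) i = pt d (Cx 1) (Cy 1) i}
            = {i : Fin d | ¬ i.val = 1} by
          ext i; by_cases h : i.val = 0 <;> by_cases h' : i.val = 1 <;> simp [pt, h, h'] <;> norm_num]
        exact ncard_ne_val h1
      · rw [show {i : Fin d | pt d (Ax 2) (Ay 2) i = pt d (Cx 2) (Cy 2) i}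
            = {i : Fin d | ¬ i.val = 1} by
          ext i; by_cases h : i.val = 0 <;> by_cases h' : i.val = 1 <;> simp [pt, h, h'] <;> norm_num]
        exact ncard_ne_val h1
      · rw [show {i : Fin d | pt d (Ax 3) (Ay 3) i = pt d (Cx 3) (Cy 3) i}
            = {i : Fin d | ¬ i.val = 0} by
          ext i; by_cases h : i.val = 0 <;> by_cases h' : i.val = 1 <;> simp [pt, h, h'] <;> norm_num]
        exact ncard_ne_val h0
      · rw [show {i : Fin d | pt d (Ax 4) (Ay 4) i = pt d (Cx 4) (Cy 4) i}
            = {i : Fin d | ¬ i.val = 0} by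
          ext i; by_cases h : i.val = 0 <;> by_cases h' : i.val = 1 <;> simp [pt, h, h'] <;> norm_num]
        exact ncard_ne_val h0
    simpa using key

lemma pierce_three (d : ℕ) : Pierceable (Box d) 3 := by
  refine ⟨{pt d 2 0, pt d 0 2, pt d 5 0}, ?_, ?_⟩
  · exact (Finset.card_insert_le _ _).trans (by
      have := Finset.card_insert_le (pt d 0 2) ({pt d 5 0} : Finset (Fin d → ℝ))
      simp at this ⊢
      omega)
  · intro i
    rcases zmod5_cases i with rfl | rfl | rfl | rfl | rfl
    · exact ⟨pt d 2 0, by simp, pt_mem_box (by norm_num) (by norm_num) (by norm_num) (by norm_num)⟩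
    · exact ⟨pt d 5 0, by simp, pt_mem_box (by norm_num) (by norm_num) (by norm_num) (by norm_num)⟩
    · exact ⟨pt d 0 2, by simp, pt_mem_box (by norm_num) (by norm_num) (by norm_num) (by norm_num)⟩
    · exact ⟨pt d 2 0, by simp, pt_mem_box (by norm_num) (by norm_num) (by norm_num) (by norm_num)⟩
    · exact ⟨pt d 0 2, by simp, pt_mem_box (by norm_num) (by norm_num) (by norm_num) (by norm_num)⟩

lemma card_two_le {d : ℕ} (a b : Fin d → ℝ) : ({a, b} : Finset (Fin d → ℝ)).card ≤ 2 :=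
  (Finset.card_insert_le _ _).trans (by simp)

lemma pierce_four (d : ℕ) (S : Finset (ZMod 5)) (hS : S.card ≤ 4) :
    PierceableOn (Box d) S 2 := by
  have hv : ∃ v : ZMod 5, v ∉ S := by
    by_contra h
    push_neg at h
    have hsub : (Finset.univ : Finset (ZMod 5)) ⊆ S := fun v _ => h v
    have := Finset.card_le_card hsub
    rw [Finset.card_univ, ZMod.card] at this
    omega
  obtain ⟨v, hv⟩ := hv
  have cover : ∀ (p q : Fin d → ℝ), (∀ i ∈ S, p ∈ Box d i ∨ q ∈ Box d i) →
      PierceableOn (Box d) S 2 := by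
    intro p q h
    refine ⟨{p, q}, card_two_le p q, fun i hi => ?_⟩
    rcases h i hi with h' | h'
    · exact ⟨p, by simp, h'⟩
    · exact ⟨q, by simp, h'⟩
  have hmem : ∀ (a b : ℝ) (w : ZMod 5), Ax w ≤ a → a ≤ Cx w → Ay w ≤ b → b ≤ Cy w →
      pt d a b ∈ Box d w := fun a b w ha ha' hb hb' => pt_mem_box ha ha' hb hb'
  rcases zmod5_cases v with rfl | rfl | rfl | rfl | rfl
  · refine cover (pt d 5 0) (pt d 0 2) (fun i hi => ?_)
    rcases zmod5_cases i with rfl | rfl | rfl | rfl | rfl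
    · exact absurd hi hv
    · exact Or.inl (hmem _ _ _ (by norm_num) (by norm_num) (by norm_num) (by norm_num))
    · exact Or.inr (hmem _ _ _ (by norm_num) (by norm_num) (by norm_num) (by norm_num))
    · exact Or.inl (hmem _ _ _ (by norm_num) (by norm_num) (by norm_num) (by norm_num))
    · exact Or.inr (hmem _ _ _ (by norm_num) (by norm_num) (by norm_num) (by norm_num))
  · refine cover (pt d 2 0) (pt d 0 2) (fun i hi => ?_)
    rcases zmod5_cases i with rfl | rfl | rfl | rfl | rfl
    · exact Or.inl (hmem _ _ _ (by norm_num) (by norm_num) (by norm_num) (by norm_num))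
    · exact absurd hi hv
    · exact Or.inr (hmem _ _ _ (by norm_num) (by norm_num) (by norm_num) (by norm_num))
    · exact Or.inl (hmem _ _ _ (by norm_num) (by norm_num) (by norm_num) (by norm_num))
    · exact Or.inr (hmem _ _ _ (by norm_num) (by norm_num) (by norm_num) (by norm_num))
  · refine cover (pt d 2 0) (pt d 5 2) (fun i hi => ?_)
    rcases zmod5_cases i with rfl | rfl | rfl | rfl | rfl
    · exact Or.inl (hmem _ _ _ (by norm_num) (by norm_num) (by norm_num) (by norm_num))
    · exact Or.inr (hmem _ _ _ (by norm_num) (by norm_num) (by norm_num) (by norm_num))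
    · exact absurd hi hv
    · exact Or.inl (hmem _ _ _ (by norm_num) (by norm_num) (by norm_num) (by norm_num))
    · exact Or.inr (hmem _ _ _ (by norm_num) (by norm_num) (by norm_num) (by norm_num))
  · refine cover (pt d 0 0) (pt d 5 2) (fun i hi => ?_)
    rcases zmod5_cases i with rfl | rfl | rfl | rfl | rfl
    · exact Or.inl (hmem _ _ _ (by norm_num) (by norm_num) (by norm_num) (by norm_num))
    · exact Or.inr (hmem _ _ _ (by norm_num) (by norm_num) (by norm_num) (by norm_num))
    · exact Or.inl (hmem _ _ _ (by norm_num) (by norm_num) (by norm_num) (by norm_num))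
    · exact absurd hi hv
    · exact Or.inr (hmem _ _ _ (by norm_num) (by norm_num) (by norm_num) (by norm_num))
  · refine cover (pt d 0 0) (pt d 5 0) (fun i hi => ?_)
    rcases zmod5_cases i with rfl | rfl | rfl | rfl | rfl
    · exact Or.inl (hmem _ _ _ (by norm_num) (by norm_num) (by norm_num) (by norm_num))
    · exact Or.inr (hmem _ _ _ (by norm_num) (by norm_num) (by norm_num) (by norm_num))
    · exact Or.inl (hmem _ _ _ (by norm_num) (by norm_num) (by norm_num) (by norm_num))
    · exact Or.inr (hmem _ _ _ (by norm_num) (by norm_num) (by norm_num) (by norm_num))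
    · exact absurd hi hv

lemma not_two (d : ℕ) (hd : 2 ≤ d) : ¬ Pierceable (Box d) 2 := by
  have h0 : (0 : ℕ) < d := by omega
  have h1 : (1 : ℕ) < d := by omega
  rintro ⟨P, hPc, hP⟩
  obtain ⟨p, hpP, hp0⟩ := hP 0
  obtain ⟨q, hqP, hq4⟩ := hP 4
  have hpy : p ⟨1, h1⟩ ≤ 0 := by simpa using (mem_box_y h1 hp0).2
  have hqy : 2 ≤ q ⟨1, h1⟩ := by simpa using (mem_box_y h1 hq4).1
  have hpq : p ≠ q := by
    intro h
    rw [h] at hpy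
    linarith
  have hPeq : ({p, q} : Finset (Fin d → ℝ)) = P := by
    apply Finset.eq_of_subset_of_card_le
    · intro x hx
      simp only [Finset.mem_insert, Finset.mem_singleton] at hx
      rcases hx with rfl | rfl <;> assumption
    · rwa [Finset.card_insert_of_notMem (by simpa using hpq), Finset.card_singleton]
  have hPmem : ∀ r ∈ P, r = p ∨ r = q := by
    intro r hr
    rw [← hPeq] at hr
    simpa using hr
  obtain ⟨r, hrP, hr3⟩ := hP 3
  have hpx3 : (2 : ℝ) ≤ p ⟨0, h0⟩ := by
    rcases hPmem r hrP with rfl | rfl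
    · simpa using (mem_box_x h0 hr3).1
    · have : r ⟨1, h1⟩ ≤ 0 := by simpa using (mem_box_y h1 hr3).2
      linarith
  have hpx0 : p ⟨0, h0⟩ ≤ 3 := by simpa using (mem_box_x h0 hp0).2
  have hqx : q ⟨0, h0⟩ ≤ 0 := by
    obtain ⟨s, hsP, hs2⟩ := hP 2
    rcases hPmem s hsP with rfl | rfl
    · have : s ⟨0, h0⟩ ≤ 0 := by simpa using (mem_box_x h0 hs2).2
      linarith
    · simpa using (mem_box_x h0 hs2).2
  obtain ⟨t, htP, ht1⟩ := hP 1
  have ht5 : (5 : ℝ) ≤ t ⟨0, h0⟩ := by simpa using (mem_box_x h0 ht1).1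
  rcases hPmem t htP with rfl | rfl
  · linarith
  · linarith

lemma disjX' {d : ℕ} (h0 : 0 < d) {u v : ZMod 5} (h : Cx u < Ax v) :
    ¬ (Box d v ∩ Box d u).Nonempty := by
  rw [Set.inter_comm]
  exact disjX h0 h

lemma disjY' {d : ℕ} (h1 : 1 < d) {u v : ZMod 5} (h : Cy u < Ay v) :
    ¬ (Box d v ∩ Box d u).Nonempty := by
  rw [Set.inter_comm]
  exact disjY h1 h

lemma adj_dec (u v : ZMod 5) : ((cyc 5)ᶜ).Adj u v ↔ (u ≠ v ∧ ¬(v = u + 1 ∨ u = v + 1)) := by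
  simp only [SimpleGraph.compl_adj, cyc, SimpleGraph.fromRel_adj]
  tauto

lemma adj_iff (u v : ZMod 5) (huv : u ≠ v) :
    ((cyc 5)ᶜ).Adj u v ↔ (Box 2 u ∩ Box 2 v).Nonempty := by
  have h0 : (0 : ℕ) < 2 := by norm_num
  have h1 : (1 : ℕ) < 2 := by norm_num
  rw [adj_dec]
  have hmem : ∀ (a b : ℝ) (w : ZMod 5), Ax w ≤ a → a ≤ Cx w → Ay w ≤ b → b ≤ Cy w →
      pt 2 a b ∈ Box 2 w := fun a b w ha ha' hb hb' => pt_mem_box ha ha' hb hb'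
  rcases zmod5_cases u with rfl | rfl | rfl | rfl | rfl <;>
    rcases zmod5_cases v with rfl | rfl | rfl | rfl | rfl
  · exact absurd rfl huv
  · exact iff_of_false (by decide) (disjX h0 (by norm_num))
  · exact iff_of_true (by decide)
      ⟨pt 2 0 0, hmem 0 0 0 (by norm_num) (by norm_num) (by norm_num) (by norm_num),
        hmem 0 0 2 (by norm_num) (by norm_num) (by norm_num) (by norm_num)⟩
  · exact iff_of_true (by decide)
      ⟨pt 2 2 0, hmem 2 0 0 (by norm_num) (by norm_num) (by norm_num) (by norm_num),
        hmem 2 0 3 (by norm_num) (by norm_num) (by norm_num) (by norm_num)⟩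
  · exact iff_of_false (by decide) (disjY h1 (by norm_num))
  · exact iff_of_false (by decide) (disjX' h0 (by norm_num))
  · exact absurd rfl huv
  · exact iff_of_false (by decide) (disjX' h0 (by norm_num))
  · exact iff_of_true (by decide)
      ⟨pt 2 5 0, hmem 5 0 1 (by norm_num) (by norm_num) (by norm_num) (by norm_num),
        hmem 5 0 3 (by norm_num) (by norm_num) (by norm_num) (by norm_num)⟩
  · exact iff_of_true (by decide)
      ⟨pt 2 5 2, hmem 5 2 1 (by norm_num) (by norm_num) (by norm_num) (by norm_num),
        hmem 5 2 4 (by norm_num) (by norm_num) (by norm_num) (by norm_num)⟩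
  · exact iff_of_true (by decide)
      ⟨pt 2 0 0, hmem 0 0 2 (by norm_num) (by norm_num) (by norm_num) (by norm_num),
        hmem 0 0 0 (by norm_num) (by norm_num) (by norm_num) (by norm_num)⟩
  · exact iff_of_false (by decide) (disjX h0 (by norm_num))
  · exact absurd rfl huv
  · exact iff_of_false (by decide) (disjX h0 (by norm_num))
  · exact iff_of_true (by decide)
      ⟨pt 2 0 2, hmem 0 2 2 (by norm_num) (by norm_num) (by norm_num) (by norm_num),
        hmem 0 2 4 (by norm_num) (by norm_num) (by norm_num) (by norm_num)⟩
  · exact iff_of_true (by decide)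
      ⟨pt 2 2 0, hmem 2 0 3 (by norm_num) (by norm_num) (by norm_num) (by norm_num),
        hmem 2 0 0 (by norm_num) (by norm_num) (by norm_num) (by norm_num)⟩
  · exact iff_of_true (by decide)
      ⟨pt 2 5 0, hmem 5 0 3 (by norm_num) (by norm_num) (by norm_num) (by norm_num),
        hmem 5 0 1 (by norm_num) (by norm_num) (by norm_num) (by norm_num)⟩
  · exact iff_of_false (by decide) (disjX' h0 (by norm_num))
  · exact absurd rfl huv
  · exact iff_of_false (by decide) (disjY h1 (by norm_num))
  · exact iff_of_false (by decide) (disjY' h1 (by norm_num))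
  · exact iff_of_true (by decide)
      ⟨pt 2 5 2, hmem 5 2 4 (by norm_num) (by norm_num) (by norm_num) (by norm_num),
        hmem 5 2 1 (by norm_num) (by norm_num) (by norm_num) (by norm_num)⟩
  · exact iff_of_true (by decide)
      ⟨pt 2 0 2, hmem 0 2 4 (by norm_num) (by norm_num) (by norm_num) (by norm_num),
        hmem 0 2 2 (by norm_num) (by norm_num) (by norm_num) (by norm_num)⟩
  · exact iff_of_false (by decide) (disjY' h1 (by norm_num))
  · exact absurd rfl huv
end C5

/-- there are 5 segments in `ℝ²` whose intersection graph is the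
complement of `C₅`; every 4 of them are 2-pierceable but the whole family needs
3 points. Hence `h(d,1,2) ≥ 5` for every `d ≥ 2`. -/
theorem segments_realizing_compl_C5_and_helly_lower_bound :
    (∃ B : ZMod 5 → Set (Fin 2 → ℝ), (∀ v, IsPBoxIn 1 2 (B v)) ∧
      (∀ u v : ZMod 5, u ≠ v → (((cyc 5)ᶜ).Adj u v ↔ (B u ∩ B v).Nonempty)) ∧
      (∀ S : Finset (ZMod 5), S.card ≤ 4 → PierceableOn B S 2) ∧
      ¬ Pierceable B 2 ∧ Pierceable B 3) ∧
    (∀ d : ℕ, 2 ≤ d → ∃ (ι : Type) (_ : Fintype ι) (B : ι → Set (Fin d → ℝ)),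
      (∀ i, IsPBoxIn 1 d (B i)) ∧
      (∀ S : Finset ι, S.card ≤ 4 → PierceableOn B S 2) ∧ ¬ Pierceable B 2) := by
  constructor
  · exact ⟨C5.Box 2, fun v => C5.isPBox 2 le_rfl v, C5.adj_iff,
      fun S hS => C5.pierce_four 2 S hS, C5.not_two 2 le_rfl, C5.pierce_three 2⟩
  · intro d hd
    exact ⟨ZMod 5, inferInstance, C5.Box d, fun v => C5.isPBox d hd v,
      fun S hS => C5.pierce_four d S hS, C5.not_two d hd⟩
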